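/- Let m be a positive even number and let i ≠ j be elements of Fin m. Let U be any one of the four matrices U_S(P(i,j)), U_P(P(i,j)), U_S(Q(i,j)), U_P(Q(i,j)), acting on qubits indexed by the label set (Fin m → ZMod 2). Then conjugation by U maps the stabilizer group S of the quantum Reed–Muller code QRM(m) onto itself: for every g ∈ S, both U * g * U⁻¹ ∈ S and U⁻¹ * g * U ∈ S. -/

import Mathlib

/-- The vector `v_A` : its value at a label `x : Fin m → ZMod 2` is `∏_{a ∈ A} x a`. -/
def vA (m : ℕ) (A : Finset (Fin m)) : (Fin m → ZMod 2) → ZMod 2 :=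
  fun x => ∏ a ∈ A, x a

/-- Qubit labels. -/
abbrev Lab (m : ℕ) := Fin m → ZMod 2

/-- Basis states: functions from qubit labels to `ZMod 2`. -/
abbrev St (m : ℕ) := Lab m → ZMod 2

/-- The Pauli-X type operator `X(w)`: the matrix with `(y, x)` entry `1` if
`y = x + w` and `0` otherwise. -/
noncomputable def Xmat (m : ℕ) (w : St m) : Matrix (St m) (St m) ℂ :=
  Matrix.of fun y x => if y = x + w then 1 else 0

/-- `N(w, x)`: the number of qubits `q` with `w q = 1` and `x q = 1`. -/
def Nwt (m : ℕ) (w x : St m) : ℕ :=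
  (Finset.univ.filter (fun q => w q = 1 ∧ x q = 1)).card

/-- The Pauli-Z type operator `Z(w)`: the diagonal matrix with `(x, x)` entry
`(-1) ^ N(w, x)`. -/
noncomputable def Zmat (m : ℕ) (w : St m) : Matrix (St m) (St m) ℂ :=
  Matrix.diagonal fun x => (-1) ^ Nwt m w x

/-- The stabilizer group of the quantum Reed–Muller code `QRM(m)`: the subgroup
of invertible complex matrices generated by the matrices `X(v_A)` and `Z(v_A)`
for `A ⊆ Fin m` with `|A| ≤ m/2 - 1`. -/
noncomputable def stab (m : ℕ) : Subgroup (Matrix (St m) (St m) ℂ)ˣ :=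
  Subgroup.closure {u : (Matrix (St m) (St m) ℂ)ˣ |
    ∃ A : Finset (Fin m), A.card ≤ m / 2 - 1 ∧
      ((u : Matrix (St m) (St m) ℂ) = Xmat m (vA m A) ∨
       (u : Matrix (St m) (St m) ℂ) = Zmat m (vA m A))}

/-- The swap-type fold-transversal gate `U_S(π)` of an involutive permutation
`π` of the qubits: the matrix with `(y, x)` entry `1` if `y = x ∘ π` and `0`
otherwise. -/
noncomputable def USg (m : ℕ) (f : Lab m → Lab m) : Matrix (St m) (St m) ℂ :=
  Matrix.of fun y x => if y = x ∘ f then 1 else 0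

/-- The phase-type fold-transversal gate `U_P(π)` of an involutive permutation
`π` of the qubits: the diagonal matrix with `(x, x)` entry `i ^ c(x)`, where
`c(x) = ∑_q x(q)·x(π(q))` computed in `ℕ`. -/
noncomputable def UPg (m : ℕ) (f : Lab m → Lab m) : Matrix (St m) (St m) ℂ :=
  Matrix.diagonal fun x => Complex.I ^ (∑ q, (x q).val * (x (f q)).val)

/-- `P(i,j)`: the involutive permutation of labels swapping coordinates `i`
and `j` of every label. -/
def Pmap (m : ℕ) (i j : Fin m) : Lab m → Lab m :=
  fun x => x ∘ Equiv.swap i j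

/-- `Q(i,j)`: the involutive permutation of labels replacing `x i` by
`x i + x j` and fixing all other coordinates. -/
def Qmap (m : ℕ) (i j : Fin m) : Lab m → Lab m :=
  fun x => Function.update x i (x i + x j)


section FoldAux

-- auxiliary lemmas
lemma pow_eq_pow_of_mod {z : ℂ} {k : ℕ} (hz : z ^ k = 1) {a b : ℕ} (h : a % k = b % k) :
    z ^ a = z ^ b := by
  have ha : z ^ a = z ^ (a % k) := by
    conv_lhs => rw [← Nat.div_add_mod a k]
    rw [pow_add, pow_mul, hz, one_pow, one_mul]
  have hb : z ^ b = z ^ (b % k) := by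
    conv_lhs => rw [← Nat.div_add_mod b k]
    rw [pow_add, pow_mul, hz, one_pow, one_mul]
  rw [ha, hb, h]

lemma I_pow_congr {a b : ℕ} (h : (a : ZMod 4) = (b : ZMod 4)) :
    Complex.I ^ a = Complex.I ^ b :=
  pow_eq_pow_of_mod Complex.I_pow_four ((ZMod.natCast_eq_natCast_iff' a b 4).mp h)

lemma neg_one_pow_congr' {a b : ℕ} (h : (a : ZMod 2) = (b : ZMod 2)) :
    (-1 : ℂ) ^ a = (-1) ^ b :=
  pow_eq_pow_of_mod (by norm_num) ((ZMod.natCast_eq_natCast_iff' a b 2).mp h)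

lemma val_cast2 (a : ZMod 2) : ((a.val : ℕ) : ZMod 2) = a := by
  simp [ZMod.natCast_val, ZMod.cast_id]

variable {m : ℕ}

lemma Nwt_eq_sum (w x : St m) : Nwt m w x = ∑ q, (w q).val * (x q).val := by
  classical
  rw [Nwt, Finset.card_filter]
  refine Finset.sum_congr rfl fun q _ => ?_
  have : ∀ a b : ZMod 2, (if (a = 1 ∧ b = 1) then (1:ℕ) else 0) = a.val * b.val := by decide
  exact this _ _

lemma add_self_St (w : St m) : w + w = 0 := by
  funext q
  exact CharTwo.add_self_eq_zero _

lemma Xmat_mul (w₁ w₂ : St m) : Xmat m w₁ * Xmat m w₂ = Xmat m (w₁ + w₂) := by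
  classical
  ext y x
  simp only [Matrix.mul_apply, Xmat, Matrix.of_apply, mul_ite, mul_one, mul_zero, ite_mul,
    one_mul, zero_mul]
  rw [Finset.sum_ite_eq' Finset.univ (x + w₂) (fun z => if y = z + w₁ then (1:ℂ) else 0)]
  simp only [Finset.mem_univ, if_true]
  have : x + w₂ + w₁ = x + (w₁ + w₂) := by ring
  rw [this]

lemma Xmat_zero : Xmat m 0 = 1 := by
  ext y x
  simp [Xmat, Matrix.one_apply]

lemma Zmat_mul (w₁ w₂ : St m) : Zmat m w₁ * Zmat m w₂ = Zmat m (w₁ + w₂) := by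
  rw [Zmat, Zmat, Zmat, Matrix.diagonal_mul_diagonal]
  refine congrArg Matrix.diagonal (funext fun x => ?_)
  rw [← pow_add]
  refine neg_one_pow_congr' ?_
  rw [Nwt_eq_sum, Nwt_eq_sum, Nwt_eq_sum]
  push_cast [val_cast2]
  rw [← Finset.sum_add_distrib]
  refine Finset.sum_congr rfl fun q _ => ?_
  show w₁ q * x q + w₂ q * x q = (w₁ + w₂) q * x q
  simp [add_mul]

lemma Zmat_zero : Zmat m 0 = 1 := by
  have h : ∀ x : St m, Nwt m 0 x = 0 := by
    intro x
    rw [Nwt]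
    convert Finset.card_empty
    refine Finset.filter_false_of_mem fun q _ => ?_
    simp
  rw [Zmat]
  have : (fun x : St m => ((-1:ℂ)) ^ Nwt m 0 x) = fun _ => 1 := by
    funext x; rw [h x]; norm_num
  rw [this, Matrix.diagonal_one]

lemma Pmap_invol (i j : Fin m) : Function.Involutive (Pmap m i j) := by
  intro x
  funext a
  simp [Pmap, Function.comp, Equiv.swap_apply_self]

lemma Qmap_invol (i j : Fin m) (hij : i ≠ j) : Function.Involutive (Qmap m i j) := by
  intro x
  funext a
  simp only [Qmap]
  by_cases ha : a = i
  · subst ha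
    rw [Function.update_self, Function.update_self, Function.update_of_ne (Ne.symm hij)]
    have : ∀ u v : ZMod 2, u + v + v = u := by decide
    rw [this]
  · rw [Function.update_of_ne ha, Function.update_of_ne ha]

lemma comp_invol {f : Lab m → Lab m} (hf : Function.Involutive f) (x : St m) :
    (x ∘ f) ∘ f = x := by
  funext q; simp [Function.comp, hf q]

lemma USg_mul_self {f : Lab m → Lab m} (hf : Function.Involutive f) :
    USg m f * USg m f = 1 := by
  classical
  ext y x
  simp only [Matrix.mul_apply, USg, Matrix.of_apply, mul_ite, mul_one, mul_zero, ite_mul,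
    one_mul, zero_mul]
  rw [Finset.sum_ite_eq' Finset.univ (x ∘ f) (fun z => if y = z ∘ f then (1:ℂ) else 0)]
  simp only [Finset.mem_univ, if_true]
  rw [comp_invol hf, Matrix.one_apply]

lemma sum_invol_reindex {M : Type*} [AddCommMonoid M] {f : Lab m → Lab m}
    (hf : Function.Involutive f) (g : Lab m → M) :
    ∑ q, g (f q) = ∑ q, g q := by
  exact Fintype.sum_equiv (hf.toPerm f) _ _ (fun q => rfl)

lemma USg_mul_X {f : Lab m → Lab m} (hf : Function.Involutive f) (w : St m) :
    USg m f * Xmat m w = Xmat m (w ∘ f) * USg m f := by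
  classical
  ext y x
  simp only [Matrix.mul_apply, USg, Xmat, Matrix.of_apply, mul_ite, mul_one, mul_zero, ite_mul,
    one_mul, zero_mul]
  rw [Finset.sum_ite_eq' Finset.univ (x + w) (fun z => if y = z ∘ f then (1:ℂ) else 0)]
  rw [Finset.sum_ite_eq' Finset.univ (x ∘ f) (fun z => if y = z + w ∘ f then (1:ℂ) else 0)]
  simp only [Finset.mem_univ, if_true]
  have : (x + w) ∘ f = x ∘ f + w ∘ f := rfl
  rw [this]

lemma Nwt_comp {f : Lab m → Lab m} (hf : Function.Involutive f) (w x : St m) :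
    Nwt m (w ∘ f) (x ∘ f) = Nwt m w x := by
  rw [Nwt_eq_sum, Nwt_eq_sum]
  exact sum_invol_reindex hf (fun q => (w q).val * (x q).val)

lemma USg_mul_Z {f : Lab m → Lab m} (hf : Function.Involutive f) (w : St m) :
    USg m f * Zmat m w = Zmat m (w ∘ f) * USg m f := by
  classical
  ext y x
  rw [Zmat, Zmat, Matrix.mul_diagonal, Matrix.diagonal_mul]
  simp only [USg, Matrix.of_apply]
  split_ifs with h
  · subst h
    rw [← Nwt_comp hf w x]
    ring
  · simp

lemma perq (a a' b b' : ZMod 2) :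
    (((a+b).val * (a'+b').val : ℕ) : ZMod 4) =
      ((a.val * a'.val : ℕ) : ZMod 4) + ((b'.val * a.val : ℕ) : ZMod 4)
      + ((b.val * a'.val : ℕ) : ZMod 4) + ((b.val * b'.val : ℕ) : ZMod 4)
      + 2 * ((((b+b')*(a*a') + (b*b')*(a+a') : ZMod 2)).val : ZMod 4) := by
  revert a a' b b'; decide

lemma eps_sum {f : Lab m → Lab m} (hf : Function.Involutive f) (w x : St m) :
    ∑ q, ((w q + w (f q))*(x q * x (f q)) + (w q * w (f q))*(x q + x (f q))) = (0 : ZMod 2) := by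
  have h1 : ∑ q, w (f q) * (x q * x (f q)) = ∑ q, w q * (x q * x (f q)) := by
    have := sum_invol_reindex hf (fun q => w q * (x q * x (f q)))
    calc ∑ q, w (f q) * (x q * x (f q))
        = ∑ q, w (f q) * (x (f q) * x (f (f q))) := by
          refine Finset.sum_congr rfl fun q _ => ?_
          rw [hf q]; ring
      _ = ∑ q, w q * (x q * x (f q)) := this
  have h2 : ∑ q, (w q * w (f q)) * x (f q) = ∑ q, (w q * w (f q)) * x q := by
    have := sum_invol_reindex hf (fun q => (w q * w (f q)) * x q)
    calc ∑ q, (w q * w (f q)) * x (f q)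
        = ∑ q, (w (f q) * w (f (f q))) * x (f q) := by
          refine Finset.sum_congr rfl fun q _ => ?_
          rw [hf q]; ring
      _ = ∑ q, (w q * w (f q)) * x q := this
  simp only [add_mul, mul_add]
  rw [Finset.sum_add_distrib, Finset.sum_add_distrib, Finset.sum_add_distrib]
  rw [h1, h2]
  have : ∀ u v : ZMod 2, u + u + (v + v) = 0 := by decide
  exact this _ _

lemma phase_sum {f : Lab m → Lab m} (hf : Function.Involutive f) (w x : St m)
    (hK : (((Finset.univ.filter fun q : Lab m => w q = 1 ∧ w (f q) = 1).card : ℕ) : ZMod 4) = 0) :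
    ((∑ q, ((x+w) q).val * ((x+w) (f q)).val : ℕ) : ZMod 4)
      = ((2 * Nwt m (fun q => w (f q)) x + ∑ q, (x q).val * (x (f q)).val : ℕ) : ZMod 4) := by
  classical
  push_cast
  have hstep : ∀ q : Lab m, (((x q + w q).val * ((x (f q)) + w (f q)).val : ℕ) : ZMod 4)
      = (((x q).val * (x (f q)).val : ℕ) : ZMod 4)
        + (((w (f q)).val * (x q).val : ℕ) : ZMod 4)
        + (((w q).val * (x (f q)).val : ℕ) : ZMod 4)
        + (((w q).val * (w (f q)).val : ℕ) : ZMod 4)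
        + 2 * ((((w q + w (f q))*(x q * x (f q)) + (w q * w (f q))*(x q + x (f q)) : ZMod 2)).val : ZMod 4) :=
    fun q => perq (x q) (x (f q)) (w q) (w (f q))
  calc (∑ q : Lab m, ((((x+w) q).val : ZMod 4) * (((x+w) (f q)).val : ZMod 4)))
      = ∑ q : Lab m, ((((x q).val * (x (f q)).val : ℕ) : ZMod 4)
        + (((w (f q)).val * (x q).val : ℕ) : ZMod 4)
        + (((w q).val * (x (f q)).val : ℕ) : ZMod 4)
        + (((w q).val * (w (f q)).val : ℕ) : ZMod 4)
        + 2 * ((((w q + w (f q))*(x q * x (f q)) + (w q * w (f q))*(x q + x (f q)) : ZMod 2)).val : ZMod 4)) := by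
        refine Finset.sum_congr rfl fun q _ => ?_
        have := hstep q
        push_cast at this ⊢
        exact this
    _ = 2 * ↑(Nwt m (fun q => w (f q)) x) + ∑ q : Lab m, (((x q).val : ZMod 4) * ((x (f q)).val : ZMod 4)) := by
        rw [Finset.sum_add_distrib, Finset.sum_add_distrib, Finset.sum_add_distrib,
          Finset.sum_add_distrib]
        -- identify the pieces
        have e3 : ∑ q : Lab m, (((w q).val * (x (f q)).val : ℕ) : ZMod 4)
            = ∑ q : Lab m, (((w (f q)).val * (x q).val : ℕ) : ZMod 4) := by
          rw [← sum_invol_reindex hf (fun q => (((w q).val * (x (f q)).val : ℕ) : ZMod 4))]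
          refine Finset.sum_congr rfl fun q _ => ?_
          rw [hf q]
        have e2 : ∑ q : Lab m, (((w (f q)).val * (x q).val : ℕ) : ZMod 4)
            = ((Nwt m (fun q => w (f q)) x : ℕ) : ZMod 4) := by
          rw [Nwt_eq_sum]
          push_cast
          rfl
        have e4 : ∑ q : Lab m, (((w q).val * (w (f q)).val : ℕ) : ZMod 4) = 0 := by
          have : Nwt m w (fun q => w (f q)) = ∑ q, (w q).val * ((w (f q)).val) := Nwt_eq_sum w _
          rw [Nwt] at this
          rw [← Nat.cast_sum, ← this]
          exact hK
        have e5 : ∑ q : Lab m, (2 : ZMod 4) * ((((w q + w (f q))*(x q * x (f q)) + (w q * w (f q))*(x q + x (f q)) : ZMod 2)).val : ZMod 4) = 0 := by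
          rw [← Finset.mul_sum, ← Nat.cast_sum]
          have hz : ((∑ q : Lab m, (((w q + w (f q))*(x q * x (f q)) + (w q * w (f q))*(x q + x (f q)) : ZMod 2)).val : ℕ) : ZMod 2) = 0 := by
            push_cast [val_cast2]
            exact eps_sum hf w x
          obtain ⟨t, ht⟩ := (ZMod.natCast_eq_zero_iff _ 2).mp hz
          rw [ht]
          push_cast
          ring_nf
          have h4 : (4 : ZMod 4) = 0 := by decide
          rw [h4, mul_zero]
        rw [e3, e2, e4, e5]
        push_cast
        ring
    _ = _ := by push_cast; rfl

noncomputable def UPgInv (m : ℕ) (f : Lab m → Lab m) : Matrix (St m) (St m) ℂ :=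
  Matrix.diagonal fun x => (Complex.I ^ (∑ q, (x q).val * (x (f q)).val))⁻¹

lemma UPg_mul_UPgInv (f : Lab m → Lab m) : UPg m f * UPgInv m f = 1 := by
  rw [UPg, UPgInv, Matrix.diagonal_mul_diagonal]
  have : ∀ x : St m, Complex.I ^ (∑ q, (x q).val * (x (f q)).val)
      * (Complex.I ^ (∑ q, (x q).val * (x (f q)).val))⁻¹ = 1 :=
    fun x => mul_inv_cancel₀ (pow_ne_zero _ Complex.I_ne_zero)
  calc Matrix.diagonal (fun x : St m => Complex.I ^ (∑ q, (x q).val * (x (f q)).val)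
      * (Complex.I ^ (∑ q, (x q).val * (x (f q)).val))⁻¹)
      = Matrix.diagonal (fun _ => 1) := congrArg _ (funext this)
    _ = 1 := Matrix.diagonal_one

lemma UPgInv_mul_UPg (f : Lab m → Lab m) : UPgInv m f * UPg m f = 1 := by
  rw [UPg, UPgInv, Matrix.diagonal_mul_diagonal]
  have : ∀ x : St m, (Complex.I ^ (∑ q, (x q).val * (x (f q)).val))⁻¹
      * Complex.I ^ (∑ q, (x q).val * (x (f q)).val) = 1 :=
    fun x => inv_mul_cancel₀ (pow_ne_zero _ Complex.I_ne_zero)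
  calc Matrix.diagonal (fun x : St m => (Complex.I ^ (∑ q, (x q).val * (x (f q)).val))⁻¹
      * Complex.I ^ (∑ q, (x q).val * (x (f q)).val))
      = Matrix.diagonal (fun _ => 1) := congrArg _ (funext this)
    _ = 1 := Matrix.diagonal_one

lemma hph_of_hK {f : Lab m → Lab m} (hf : Function.Involutive f) (w : St m)
    (hK : (((Finset.univ.filter fun q : Lab m => w q = 1 ∧ w (f q) = 1).card : ℕ) : ZMod 4) = 0)
    (x : St m) :
    Complex.I ^ (∑ q, ((x+w) q).val * ((x+w) (f q)).val)
      = (-1) ^ (Nwt m (fun q => w (f q)) x) * Complex.I ^ (∑ q, (x q).val * (x (f q)).val) := by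
  have h := I_pow_congr (phase_sum hf w x hK)
  rw [h, pow_add, pow_mul, Complex.I_sq]

lemma UPg_mul_X {f : Lab m → Lab m} (hf : Function.Involutive f) (w : St m)
    (hK : (((Finset.univ.filter fun q : Lab m => w q = 1 ∧ w (f q) = 1).card : ℕ) : ZMod 4) = 0) :
    UPg m f * Xmat m w = (Xmat m w * Zmat m (fun q => w (f q))) * UPg m f := by
  ext y x
  rw [UPg, Zmat, Matrix.diagonal_mul, Matrix.mul_diagonal, Matrix.mul_diagonal]
  simp only [Xmat, Matrix.of_apply]
  split_ifs with h
  · subst h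
    rw [mul_one, one_mul]
    exact hph_of_hK hf w hK x
  · simp

lemma UPgInv_mul_X {f : Lab m → Lab m} (hf : Function.Involutive f) (w : St m)
    (hK : (((Finset.univ.filter fun q : Lab m => w q = 1 ∧ w (f q) = 1).card : ℕ) : ZMod 4) = 0) :
    UPgInv m f * Xmat m w = (Xmat m w * Zmat m (fun q => w (f q))) * UPgInv m f := by
  ext y x
  rw [UPgInv, Zmat, Matrix.diagonal_mul, Matrix.mul_diagonal, Matrix.mul_diagonal]
  simp only [Xmat, Matrix.of_apply]
  split_ifs with h
  · subst h
    rw [mul_one, one_mul, hph_of_hK hf w hK x, mul_inv]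
    have hinv : ((-1:ℂ) ^ (Nwt m (fun q => w (f q)) x))⁻¹ = (-1) ^ (Nwt m (fun q => w (f q)) x) := by
      rw [← inv_pow, inv_neg, inv_one]
    rw [hinv, mul_comm]
  · simp

lemma diag_comm (d e : St m → ℂ) :
    Matrix.diagonal d * Matrix.diagonal e = Matrix.diagonal e * Matrix.diagonal d := by
  rw [Matrix.diagonal_mul_diagonal, Matrix.diagonal_mul_diagonal]
  exact congrArg _ (funext fun i => mul_comm _ _)

lemma UPg_comm_Z (f : Lab m → Lab m) (w : St m) :
    UPg m f * Zmat m w = Zmat m w * UPg m f := diag_comm _ _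

lemma UPgInv_comm_Z (f : Lab m → Lab m) (w : St m) :
    UPgInv m f * Zmat m w = Zmat m w * UPgInv m f := diag_comm _ _

lemma vA_eq_one {A : Finset (Fin m)} {q : Lab m} : vA m A q = 1 ↔ ∀ a ∈ A, q a = 1 := by
  constructor
  · intro h a ha
    by_contra hne
    have h0 : q a = 0 := by
      have : ∀ z : ZMod 2, z ≠ 1 → z = 0 := by decide
      exact this _ hne
    have : vA m A q = 0 := Finset.prod_eq_zero ha h0
    rw [this] at h
    exact (by decide : (0:ZMod 2) ≠ 1) h
  · intro h
    exact Finset.prod_eq_one h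

lemma prod_insert_idem (x : Lab m) (s : Finset (Fin m)) (j : Fin m) :
    x j * ∏ a ∈ s, x a = ∏ a ∈ insert j s, x a := by
  classical
  by_cases hj : j ∈ s
  · rw [Finset.insert_eq_self.mpr hj, ← Finset.mul_prod_erase s x hj, ← mul_assoc]
    have : ∀ z : ZMod 2, z * z = z := by decide
    rw [this]
  · rw [Finset.prod_insert hj]

lemma vA_comp_P (i j : Fin m) (A : Finset (Fin m)) :
    (fun q => vA m A (Pmap m i j q)) = vA m (A.image (Equiv.swap i j)) := by
  funext q
  rw [vA, vA, Finset.prod_image (fun a _ b _ h => (Equiv.swap i j).injective h)]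
  rfl

lemma vA_comp_Q_notmem {i j : Fin m} (A : Finset (Fin m)) (hi : i ∉ A) :
    (fun q => vA m A (Qmap m i j q)) = vA m A := by
  funext q
  refine Finset.prod_congr rfl fun a ha => ?_
  exact Function.update_of_ne (fun h => hi (by rwa [← h])) _ _

lemma vA_comp_Q_mem {i j : Fin m} (A : Finset (Fin m)) (hi : i ∈ A) :
    (fun q => vA m A (Qmap m i j q)) = vA m A + vA m (insert j (A.erase i)) := by
  classical
  funext q
  show vA m A (Qmap m i j q) = vA m A q + vA m (insert j (A.erase i)) q
  rw [vA, ← Finset.mul_prod_erase A _ hi]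
  have h1 : (Qmap m i j q) i = q i + q j := Function.update_self _ _ _
  have h2 : ∀ a ∈ A.erase i, (Qmap m i j q) a = q a := fun a ha =>
    Function.update_of_ne (Finset.ne_of_mem_erase ha) _ _
  rw [Finset.prod_congr rfl h2, h1, add_mul]
  rw [Finset.mul_prod_erase A q hi]
  rw [prod_insert_idem]
  rfl

lemma card_eq_on (D : Finset (Fin m)) (σ : Fin m → ZMod 2) :
    (Finset.univ.filter fun q : Lab m => ∀ a ∈ D, q a = σ a).card = 2 ^ (m - D.card) := by
  classical
  rw [← Fintype.card_subtype]
  have e : {q : Lab m // ∀ a ∈ D, q a = σ a} ≃ ({a : Fin m // a ∉ D} → ZMod 2) :=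
  { toFun := fun q a => q.1 a.1
    invFun := fun g => ⟨fun a => if h : a ∈ D then σ a else g ⟨a, h⟩, fun a ha => dif_pos ha⟩
    left_inv := by
      intro q
      apply Subtype.ext
      funext a
      dsimp only
      by_cases h : a ∈ D
      · rw [dif_pos h]; exact (q.2 a h).symm
      · rw [dif_neg h]
    right_inv := by
      intro g
      funext a
      dsimp only
      rw [dif_neg a.2] }
  rw [Fintype.card_congr e, Fintype.card_fun]
  have hc : Fintype.card {a : Fin m // a ∉ D} = m - D.card := by
    rw [Fintype.card_subtype]
    have h2 : (Finset.univ.filter fun a : Fin m => a ∉ D) = Dᶜ := by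
      ext a; simp
    rw [h2, Finset.card_compl, Fintype.card_fin]
  rw [hc, ZMod.card]

lemma pow2_cast4 {e : ℕ} (he : 2 ≤ e) : ((2^e : ℕ) : ZMod 4) = 0 := by
  obtain ⟨k, rfl⟩ := Nat.exists_eq_add_of_le he
  push_cast
  rw [pow_add]
  have : (2:ZMod 4)^2 = 0 := by decide
  rw [this, zero_mul]

lemma hK_P (i j : Fin m) (A : Finset (Fin m)) (hm : m % 2 = 0) (h0 : 0 < m)
    (hA : A.card ≤ m/2 - 1) :
    (((Finset.univ.filter fun q : Lab m =>
        vA m A q = 1 ∧ vA m A (Pmap m i j q) = 1).card : ℕ) : ZMod 4) = 0 := by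
  classical
  have hfe : (Finset.univ.filter fun q : Lab m => vA m A q = 1 ∧ vA m A (Pmap m i j q) = 1)
      = Finset.univ.filter fun q : Lab m =>
          ∀ a ∈ A ∪ A.image (Equiv.swap i j), q a = (fun _ => (1:ZMod 2)) a := by
    apply Finset.filter_congr
    intro q _
    rw [congrFun (vA_comp_P i j A) q, vA_eq_one, vA_eq_one]
    simp [Finset.mem_union, or_imp, forall_and]
  rw [hfe, card_eq_on]
  apply pow2_cast4
  have hc : (A ∪ A.image (Equiv.swap i j)).card ≤ 2 * A.card := by
    calc (A ∪ A.image (Equiv.swap i j)).card ≤ A.card + (A.image (Equiv.swap i j)).card :=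
          Finset.card_union_le _ _
      _ ≤ A.card + A.card := by
          have := Finset.card_image_le (s := A) (f := Equiv.swap i j)
          omega
      _ = 2 * A.card := by ring
  omega

lemma hK_Q (i j : Fin m) (hij : i ≠ j) (A : Finset (Fin m)) (hm : m % 2 = 0) (h0 : 0 < m)
    (hA : A.card ≤ m/2 - 1) :
    (((Finset.univ.filter fun q : Lab m =>
        vA m A q = 1 ∧ vA m A (Qmap m i j q) = 1).card : ℕ) : ZMod 4) = 0 := by
  classical
  have hQi : ∀ q : Lab m, (Qmap m i j q) i = q i + q j := fun q => Function.update_self _ _ _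
  have hQne : ∀ (q : Lab m) (a : Fin m), a ≠ i → (Qmap m i j q) a = q a := fun q a ha =>
    Function.update_of_ne ha _ _
  by_cases hi : i ∈ A
  · by_cases hj : j ∈ A
    · have hfe : (Finset.univ.filter fun q : Lab m =>
          vA m A q = 1 ∧ vA m A (Qmap m i j q) = 1) = ∅ := by
        refine Finset.filter_false_of_mem fun q _ => ?_
        rintro ⟨h1, h2⟩
        have hq := vA_eq_one.mp h1
        have h2' := vA_eq_one.mp h2
        have hii := h2' i hi
        rw [hQi q, hq i hi, hq j hj] at hii
        exact (by decide : ¬((1:ZMod 2) + 1 = 1)) hii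
      rw [hfe]
      simp
    · have hfe : (Finset.univ.filter fun q : Lab m =>
          vA m A q = 1 ∧ vA m A (Qmap m i j q) = 1)
          = Finset.univ.filter fun q : Lab m =>
              ∀ a ∈ insert j A, q a = (fun a => if a = j then (0:ZMod 2) else 1) a := by
        apply Finset.filter_congr
        intro q _
        constructor
        · rintro ⟨h1, h2⟩
          have hq := vA_eq_one.mp h1
          have h2' := vA_eq_one.mp h2
          have hji : q i + q j = 1 := by rw [← hQi q]; exact h2' i hi
          have hqj : q j = 0 := by
            have h1i : q i = 1 := hq i hi
            have : ∀ u v : ZMod 2, u = 1 → u + v = 1 → v = 0 := by decide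
            exact this _ _ h1i hji
          intro a ha
          dsimp only
          rcases Finset.mem_insert.mp ha with h | h
          · subst h; rw [if_pos rfl]; exact hqj
          · rw [if_neg (fun he : a = j => hj (he ▸ h))]
            exact hq a h
        · intro h
          have hq1 : ∀ a ∈ A, q a = 1 := by
            intro a ha
            have := h a (Finset.mem_insert_of_mem ha)
            dsimp only at this
            rwa [if_neg (fun he : a = j => hj (he ▸ ha))] at this
          have hqj : q j = 0 := by
            have := h j (Finset.mem_insert_self _ _)
            dsimp only at this
            rwa [if_pos rfl] at this
          refine ⟨vA_eq_one.mpr hq1, vA_eq_one.mpr ?_⟩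
          intro a ha
          by_cases hai : a = i
          · subst hai
            rw [hQi q, hq1 a hi, hqj]
            decide
          · rw [hQne q a hai]
            exact hq1 a ha
      rw [hfe, card_eq_on]
      apply pow2_cast4
      have hcard : (insert j A).card = A.card + 1 := Finset.card_insert_of_notMem hj
      have hpos : 1 ≤ A.card := Finset.card_pos.mpr ⟨i, hi⟩
      omega
  · have hfe : (Finset.univ.filter fun q : Lab m =>
        vA m A q = 1 ∧ vA m A (Qmap m i j q) = 1)
        = Finset.univ.filter fun q : Lab m => ∀ a ∈ A, q a = (fun _ => (1:ZMod 2)) a := by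
      apply Finset.filter_congr
      intro q _
      rw [congrFun (vA_comp_Q_notmem A hi) q, and_self, vA_eq_one]
    rw [hfe, card_eq_on]
    apply pow2_cast4
    omega


-- comp-form versions of the vA composition lemmas
lemma vA_comp_P' {m : ℕ} (i j : Fin m) (A : Finset (Fin m)) :
    vA m A ∘ Pmap m i j = vA m (A.image (Equiv.swap i j)) := vA_comp_P i j A

lemma vA_comp_Q_notmem' {m : ℕ} {i j : Fin m} (A : Finset (Fin m)) (hi : i ∉ A) :
    vA m A ∘ Qmap m i j = vA m A := vA_comp_Q_notmem A hi

lemma vA_comp_Q_mem' {m : ℕ} {i j : Fin m} (A : Finset (Fin m)) (hi : i ∈ A) :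
    vA m A ∘ Qmap m i j = vA m A + vA m (insert j (A.erase i)) := vA_comp_Q_mem A hi

-- units
noncomputable def xU (m : ℕ) (w : St m) : (Matrix (St m) (St m) ℂ)ˣ :=
  ⟨Xmat m w, Xmat m w,
    by rw [Xmat_mul, add_self_St, Xmat_zero],
    by rw [Xmat_mul, add_self_St, Xmat_zero]⟩

noncomputable def zU (m : ℕ) (w : St m) : (Matrix (St m) (St m) ℂ)ˣ :=
  ⟨Zmat m w, Zmat m w,
    by rw [Zmat_mul, add_self_St, Zmat_zero],
    by rw [Zmat_mul, add_self_St, Zmat_zero]⟩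

noncomputable def sU (m : ℕ) (f : Lab m → Lab m) (hf : Function.Involutive f) :
    (Matrix (St m) (St m) ℂ)ˣ :=
  ⟨USg m f, USg m f, USg_mul_self hf, USg_mul_self hf⟩

noncomputable def pU (m : ℕ) (f : Lab m → Lab m) : (Matrix (St m) (St m) ℂ)ˣ :=
  ⟨UPg m f, UPgInv m f, UPg_mul_UPgInv f, UPgInv_mul_UPg f⟩

def genSet (m : ℕ) : Set (Matrix (St m) (St m) ℂ)ˣ :=
  {u : (Matrix (St m) (St m) ℂ)ˣ |
    ∃ A : Finset (Fin m), A.card ≤ m / 2 - 1 ∧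
      ((u : Matrix (St m) (St m) ℂ) = Xmat m (vA m A) ∨
       (u : Matrix (St m) (St m) ℂ) = Zmat m (vA m A))}

lemma xU_mem {m : ℕ} {A : Finset (Fin m)} (hA : A.card ≤ m / 2 - 1) :
    xU m (vA m A) ∈ stab m :=
  Subgroup.subset_closure ⟨A, hA, Or.inl rfl⟩

lemma zU_mem {m : ℕ} {A : Finset (Fin m)} (hA : A.card ≤ m / 2 - 1) :
    zU m (vA m A) ∈ stab m :=
  Subgroup.subset_closure ⟨A, hA, Or.inr rfl⟩

lemma conj_mem {G : Type*} [Group G] {S : Set G} {u : G}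
    (h : ∀ s ∈ S, u * s * u⁻¹ ∈ Subgroup.closure S) :
    ∀ g ∈ Subgroup.closure S, u * g * u⁻¹ ∈ Subgroup.closure S := by
  intro g hg
  exact Subgroup.closure_induction (p := fun g _ => u * g * u⁻¹ ∈ Subgroup.closure S)
    (fun s hs => h s hs)
    (by simpa using Subgroup.one_mem _)
    (fun a b _ _ iha ihb => by
      show u * (a * b) * u⁻¹ ∈ Subgroup.closure S
      have hab : u * (a * b) * u⁻¹ = (u * a * u⁻¹) * (u * b * u⁻¹) := by group
      rw [hab]; exact mul_mem iha ihb)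
    (fun a _ iha => by
      show u * a⁻¹ * u⁻¹ ∈ Subgroup.closure S
      have hai : u * a⁻¹ * u⁻¹ = (u * a * u⁻¹)⁻¹ := by group
      rw [hai]; exact inv_mem iha)
    hg

lemma main_of_unit {m : ℕ} (U : Matrix (St m) (St m) ℂ) (u : (Matrix (St m) (St m) ℂ)ˣ)
    (huv : (u : Matrix (St m) (St m) ℂ) = U)
    (h1 : ∀ s ∈ genSet m, u * s * u⁻¹ ∈ stab m)
    (h2 : ∀ s ∈ genSet m, u⁻¹ * s * u ∈ stab m) :
    ∀ g ∈ stab m,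
      (∃ h ∈ stab m, (h : Matrix (St m) (St m) ℂ) = U * (g : Matrix (St m) (St m) ℂ) * U⁻¹) ∧
      (∃ h ∈ stab m, (h : Matrix (St m) (St m) ℂ) = U⁻¹ * (g : Matrix (St m) (St m) ℂ) * U) := by
  intro g hg
  have hUinv : ((u⁻¹ : (Matrix (St m) (St m) ℂ)ˣ) : Matrix (St m) (St m) ℂ) = U⁻¹ := by
    rw [← huv, Matrix.coe_units_inv]
  have hstab : stab m = Subgroup.closure (genSet m) := rfl
  constructor
  · refine ⟨u * g * u⁻¹, ?_, ?_⟩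
    · rw [hstab] at h1 hg ⊢
      exact conj_mem h1 g hg
    · rw [Units.val_mul, Units.val_mul, huv, hUinv]
  · refine ⟨u⁻¹ * g * u, ?_, ?_⟩
    · rw [hstab] at h2 hg ⊢
      have h2' : ∀ s ∈ genSet m, u⁻¹ * s * (u⁻¹)⁻¹ ∈ Subgroup.closure (genSet m) := by
        simpa [inv_inv] using h2
      simpa [inv_inv] using conj_mem h2' g hg
    · rw [Units.val_mul, Units.val_mul, huv, hUinv]

end FoldAux

/-- For distinct `i, j`, conjugation by any of `U_S(P(i,j))`, `U_P(P(i,j))`,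
`U_S(Q(i,j))`, `U_P(Q(i,j))` maps the stabilizer group of `QRM(m)` onto
itself. -/
theorem stmt9 (m : ℕ) (hm : Even m) (h0 : 0 < m) (i j : Fin m) (hij : i ≠ j)
    (U : Matrix (St m) (St m) ℂ)
    (hU : U = USg m (Pmap m i j) ∨ U = UPg m (Pmap m i j) ∨
          U = USg m (Qmap m i j) ∨ U = UPg m (Qmap m i j)) :
    ∀ g ∈ stab m,
      (∃ h ∈ stab m, (h : Matrix (St m) (St m) ℂ) = U * (g : Matrix (St m) (St m) ℂ) * U⁻¹) ∧
      (∃ h ∈ stab m, (h : Matrix (St m) (St m) ℂ) = U⁻¹ * (g : Matrix (St m) (St m) ℂ) * U) := by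
  classical
  have hm2 : m % 2 = 0 := Nat.even_iff.mp hm
  rcases hU with h | h | h | h
  · -- U = USg (Pmap)
    subst h
    have hf := Pmap_invol (m := m) i j
    have hself : (sU m (Pmap m i j) hf)⁻¹ = sU m (Pmap m i j) hf := Units.ext rfl
    have hgen : ∀ s ∈ genSet m, sU m (Pmap m i j) hf * s * (sU m (Pmap m i j) hf)⁻¹ ∈ stab m := by
      rintro s ⟨A, hA, hs | hs⟩
      · have hval : ((sU m (Pmap m i j) hf * s * (sU m (Pmap m i j) hf)⁻¹ :
            (Matrix (St m) (St m) ℂ)ˣ) : Matrix (St m) (St m) ℂ)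
            = Xmat m (vA m (A.image (Equiv.swap i j))) := by
          rw [Units.val_mul, Units.val_mul]
          show USg m (Pmap m i j) * (s : Matrix (St m) (St m) ℂ) * USg m (Pmap m i j) = _
          rw [hs, USg_mul_X hf, mul_assoc, USg_mul_self hf, mul_one, vA_comp_P']
        have heq : sU m (Pmap m i j) hf * s * (sU m (Pmap m i j) hf)⁻¹
            = xU m (vA m (A.image (Equiv.swap i j))) := Units.ext hval
        rw [heq]
        exact xU_mem (le_trans Finset.card_image_le hA)
      · have hval : ((sU m (Pmap m i j) hf * s * (sU m (Pmap m i j) hf)⁻¹ :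
            (Matrix (St m) (St m) ℂ)ˣ) : Matrix (St m) (St m) ℂ)
            = Zmat m (vA m (A.image (Equiv.swap i j))) := by
          rw [Units.val_mul, Units.val_mul]
          show USg m (Pmap m i j) * (s : Matrix (St m) (St m) ℂ) * USg m (Pmap m i j) = _
          rw [hs, USg_mul_Z hf, mul_assoc, USg_mul_self hf, mul_one, vA_comp_P']
        have heq : sU m (Pmap m i j) hf * s * (sU m (Pmap m i j) hf)⁻¹
            = zU m (vA m (A.image (Equiv.swap i j))) := Units.ext hval
        rw [heq]
        exact zU_mem (le_trans Finset.card_image_le hA)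
    refine main_of_unit _ (sU m (Pmap m i j) hf) rfl hgen ?_
    intro s hs
    have := hgen s hs
    rwa [hself] at this ⊢
  · -- U = UPg (Pmap)
    subst h
    have hf := Pmap_invol (m := m) i j
    have hgen : ∀ s ∈ genSet m, pU m (Pmap m i j) * s * (pU m (Pmap m i j))⁻¹ ∈ stab m := by
      rintro s ⟨A, hA, hs | hs⟩
      · have hK := hK_P i j A hm2 h0 hA
        have hval : ((pU m (Pmap m i j) * s * (pU m (Pmap m i j))⁻¹ :
            (Matrix (St m) (St m) ℂ)ˣ) : Matrix (St m) (St m) ℂ)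
            = Xmat m (vA m A) * Zmat m (vA m (A.image (Equiv.swap i j))) := by
          rw [Units.val_mul, Units.val_mul]
          show UPg m (Pmap m i j) * (s : Matrix (St m) (St m) ℂ) * UPgInv m (Pmap m i j) = _
          rw [hs, UPg_mul_X hf _ hK, mul_assoc, UPg_mul_UPgInv, mul_one, vA_comp_P]
        have heq : pU m (Pmap m i j) * s * (pU m (Pmap m i j))⁻¹
            = xU m (vA m A) * zU m (vA m (A.image (Equiv.swap i j))) :=
          Units.ext (by rw [hval, Units.val_mul]; rfl)
        rw [heq]
        exact mul_mem (xU_mem hA) (zU_mem (le_trans Finset.card_image_le hA))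
      · have hval : ((pU m (Pmap m i j) * s * (pU m (Pmap m i j))⁻¹ :
            (Matrix (St m) (St m) ℂ)ˣ) : Matrix (St m) (St m) ℂ) = Zmat m (vA m A) := by
          rw [Units.val_mul, Units.val_mul]
          show UPg m (Pmap m i j) * (s : Matrix (St m) (St m) ℂ) * UPgInv m (Pmap m i j) = _
          rw [hs, UPg_comm_Z, mul_assoc, UPg_mul_UPgInv, mul_one]
        have heq : pU m (Pmap m i j) * s * (pU m (Pmap m i j))⁻¹ = zU m (vA m A) :=
          Units.ext hval
        rw [heq]
        exact zU_mem hA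
    have hgen' : ∀ s ∈ genSet m, (pU m (Pmap m i j))⁻¹ * s * pU m (Pmap m i j) ∈ stab m := by
      rintro s ⟨A, hA, hs | hs⟩
      · have hK := hK_P i j A hm2 h0 hA
        have hval : (((pU m (Pmap m i j))⁻¹ * s * pU m (Pmap m i j) :
            (Matrix (St m) (St m) ℂ)ˣ) : Matrix (St m) (St m) ℂ)
            = Xmat m (vA m A) * Zmat m (vA m (A.image (Equiv.swap i j))) := by
          rw [Units.val_mul, Units.val_mul]
          show UPgInv m (Pmap m i j) * (s : Matrix (St m) (St m) ℂ) * UPg m (Pmap m i j) = _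
          rw [hs, UPgInv_mul_X hf _ hK, mul_assoc, UPgInv_mul_UPg, mul_one, vA_comp_P]
        have heq : (pU m (Pmap m i j))⁻¹ * s * pU m (Pmap m i j)
            = xU m (vA m A) * zU m (vA m (A.image (Equiv.swap i j))) :=
          Units.ext (by rw [hval, Units.val_mul]; rfl)
        rw [heq]
        exact mul_mem (xU_mem hA) (zU_mem (le_trans Finset.card_image_le hA))
      · have hval : (((pU m (Pmap m i j))⁻¹ * s * pU m (Pmap m i j) :
            (Matrix (St m) (St m) ℂ)ˣ) : Matrix (St m) (St m) ℂ) = Zmat m (vA m A) := by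
          rw [Units.val_mul, Units.val_mul]
          show UPgInv m (Pmap m i j) * (s : Matrix (St m) (St m) ℂ) * UPg m (Pmap m i j) = _
          rw [hs, UPgInv_comm_Z, mul_assoc, UPgInv_mul_UPg, mul_one]
        have heq : (pU m (Pmap m i j))⁻¹ * s * pU m (Pmap m i j) = zU m (vA m A) :=
          Units.ext hval
        rw [heq]
        exact zU_mem hA
    exact main_of_unit _ (pU m (Pmap m i j)) rfl hgen hgen'
  · -- U = USg (Qmap)
    subst h
    have hf := Qmap_invol (m := m) i j hij
    have hself : (sU m (Qmap m i j) hf)⁻¹ = sU m (Qmap m i j) hf := Units.ext rfl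
    have hgen : ∀ s ∈ genSet m, sU m (Qmap m i j) hf * s * (sU m (Qmap m i j) hf)⁻¹ ∈ stab m := by
      rintro s ⟨A, hA, hs | hs⟩
      · by_cases hi : i ∈ A
        · have hB : (insert j (A.erase i)).card ≤ m / 2 - 1 := by
            have h1 : (A.erase i).card = A.card - 1 := Finset.card_erase_of_mem hi
            have h2 : (insert j (A.erase i)).card ≤ (A.erase i).card + 1 :=
              Finset.card_insert_le _ _
            have hpos : 1 ≤ A.card := Finset.card_pos.mpr ⟨i, hi⟩
            omega
          have hval : ((sU m (Qmap m i j) hf * s * (sU m (Qmap m i j) hf)⁻¹ :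
              (Matrix (St m) (St m) ℂ)ˣ) : Matrix (St m) (St m) ℂ)
              = Xmat m (vA m A) * Xmat m (vA m (insert j (A.erase i))) := by
            rw [Units.val_mul, Units.val_mul]
            show USg m (Qmap m i j) * (s : Matrix (St m) (St m) ℂ) * USg m (Qmap m i j) = _
            rw [hs, USg_mul_X hf, mul_assoc, USg_mul_self hf, mul_one, vA_comp_Q_mem' A hi,
              ← Xmat_mul]
          have heq : sU m (Qmap m i j) hf * s * (sU m (Qmap m i j) hf)⁻¹
              = xU m (vA m A) * xU m (vA m (insert j (A.erase i))) :=
            Units.ext (by rw [hval, Units.val_mul]; rfl)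
          rw [heq]
          exact mul_mem (xU_mem hA) (xU_mem hB)
        · have hval : ((sU m (Qmap m i j) hf * s * (sU m (Qmap m i j) hf)⁻¹ :
              (Matrix (St m) (St m) ℂ)ˣ) : Matrix (St m) (St m) ℂ) = Xmat m (vA m A) := by
            rw [Units.val_mul, Units.val_mul]
            show USg m (Qmap m i j) * (s : Matrix (St m) (St m) ℂ) * USg m (Qmap m i j) = _
            rw [hs, USg_mul_X hf, mul_assoc, USg_mul_self hf, mul_one, vA_comp_Q_notmem' A hi]
          have heq : sU m (Qmap m i j) hf * s * (sU m (Qmap m i j) hf)⁻¹ = xU m (vA m A) :=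
            Units.ext hval
          rw [heq]
          exact xU_mem hA
      · by_cases hi : i ∈ A
        · have hB : (insert j (A.erase i)).card ≤ m / 2 - 1 := by
            have h1 : (A.erase i).card = A.card - 1 := Finset.card_erase_of_mem hi
            have h2 : (insert j (A.erase i)).card ≤ (A.erase i).card + 1 :=
              Finset.card_insert_le _ _
            have hpos : 1 ≤ A.card := Finset.card_pos.mpr ⟨i, hi⟩
            omega
          have hval : ((sU m (Qmap m i j) hf * s * (sU m (Qmap m i j) hf)⁻¹ :
              (Matrix (St m) (St m) ℂ)ˣ) : Matrix (St m) (St m) ℂ)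
              = Zmat m (vA m A) * Zmat m (vA m (insert j (A.erase i))) := by
            rw [Units.val_mul, Units.val_mul]
            show USg m (Qmap m i j) * (s : Matrix (St m) (St m) ℂ) * USg m (Qmap m i j) = _
            rw [hs, USg_mul_Z hf, mul_assoc, USg_mul_self hf, mul_one, vA_comp_Q_mem' A hi,
              ← Zmat_mul]
          have heq : sU m (Qmap m i j) hf * s * (sU m (Qmap m i j) hf)⁻¹
              = zU m (vA m A) * zU m (vA m (insert j (A.erase i))) :=
            Units.ext (by rw [hval, Units.val_mul]; rfl)
          rw [heq]
          exact mul_mem (zU_mem hA) (zU_mem hB)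
        · have hval : ((sU m (Qmap m i j) hf * s * (sU m (Qmap m i j) hf)⁻¹ :
              (Matrix (St m) (St m) ℂ)ˣ) : Matrix (St m) (St m) ℂ) = Zmat m (vA m A) := by
            rw [Units.val_mul, Units.val_mul]
            show USg m (Qmap m i j) * (s : Matrix (St m) (St m) ℂ) * USg m (Qmap m i j) = _
            rw [hs, USg_mul_Z hf, mul_assoc, USg_mul_self hf, mul_one, vA_comp_Q_notmem' A hi]
          have heq : sU m (Qmap m i j) hf * s * (sU m (Qmap m i j) hf)⁻¹ = zU m (vA m A) :=
            Units.ext hval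
          rw [heq]
          exact zU_mem hA
    refine main_of_unit _ (sU m (Qmap m i j) hf) rfl hgen ?_
    intro s hs
    have := hgen s hs
    rwa [hself] at this ⊢
  · -- U = UPg (Qmap)
    subst h
    have hf := Qmap_invol (m := m) i j hij
    have key : ∀ (M : Matrix (St m) (St m) ℂ) (hM1 : UPg m (Qmap m i j) * M
          = M * UPg m (Qmap m i j) → True), True := fun _ _ => trivial
    have hgen : ∀ s ∈ genSet m, pU m (Qmap m i j) * s * (pU m (Qmap m i j))⁻¹ ∈ stab m := by
      rintro s ⟨A, hA, hs | hs⟩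
      · have hK := hK_Q i j hij A hm2 h0 hA
        have hval : ((pU m (Qmap m i j) * s * (pU m (Qmap m i j))⁻¹ :
            (Matrix (St m) (St m) ℂ)ˣ) : Matrix (St m) (St m) ℂ)
            = Xmat m (vA m A) * Zmat m (fun q => vA m A (Qmap m i j q)) := by
          rw [Units.val_mul, Units.val_mul]
          show UPg m (Qmap m i j) * (s : Matrix (St m) (St m) ℂ) * UPgInv m (Qmap m i j) = _
          rw [hs, UPg_mul_X hf _ hK, mul_assoc, UPg_mul_UPgInv, mul_one]
        by_cases hi : i ∈ A
        · have hB : (insert j (A.erase i)).card ≤ m / 2 - 1 := by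
            have h1 : (A.erase i).card = A.card - 1 := Finset.card_erase_of_mem hi
            have h2 : (insert j (A.erase i)).card ≤ (A.erase i).card + 1 :=
              Finset.card_insert_le _ _
            have hpos : 1 ≤ A.card := Finset.card_pos.mpr ⟨i, hi⟩
            omega
          have heq : pU m (Qmap m i j) * s * (pU m (Qmap m i j))⁻¹
              = xU m (vA m A) * (zU m (vA m A) * zU m (vA m (insert j (A.erase i)))) := by
            refine Units.ext ?_
            rw [hval, Units.val_mul, Units.val_mul, vA_comp_Q_mem A hi, ← Zmat_mul]
            rfl
          rw [heq]
          exact mul_mem (xU_mem hA) (mul_mem (zU_mem hA) (zU_mem hB))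
        · have heq : pU m (Qmap m i j) * s * (pU m (Qmap m i j))⁻¹
              = xU m (vA m A) * zU m (vA m A) := by
            refine Units.ext ?_
            rw [hval, Units.val_mul, vA_comp_Q_notmem A hi]
            rfl
          rw [heq]
          exact mul_mem (xU_mem hA) (zU_mem hA)
      · have hval : ((pU m (Qmap m i j) * s * (pU m (Qmap m i j))⁻¹ :
            (Matrix (St m) (St m) ℂ)ˣ) : Matrix (St m) (St m) ℂ) = Zmat m (vA m A) := by
          rw [Units.val_mul, Units.val_mul]
          show UPg m (Qmap m i j) * (s : Matrix (St m) (St m) ℂ) * UPgInv m (Qmap m i j) = _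
          rw [hs, UPg_comm_Z, mul_assoc, UPg_mul_UPgInv, mul_one]
        have heq : pU m (Qmap m i j) * s * (pU m (Qmap m i j))⁻¹ = zU m (vA m A) :=
          Units.ext hval
        rw [heq]
        exact zU_mem hA
    have hgen' : ∀ s ∈ genSet m, (pU m (Qmap m i j))⁻¹ * s * pU m (Qmap m i j) ∈ stab m := by
      rintro s ⟨A, hA, hs | hs⟩
      · have hK := hK_Q i j hij A hm2 h0 hA
        have hval : (((pU m (Qmap m i j))⁻¹ * s * pU m (Qmap m i j) :
            (Matrix (St m) (St m) ℂ)ˣ) : Matrix (St m) (St m) ℂ)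
            = Xmat m (vA m A) * Zmat m (fun q => vA m A (Qmap m i j q)) := by
          rw [Units.val_mul, Units.val_mul]
          show UPgInv m (Qmap m i j) * (s : Matrix (St m) (St m) ℂ) * UPg m (Qmap m i j) = _
          rw [hs, UPgInv_mul_X hf _ hK, mul_assoc, UPgInv_mul_UPg, mul_one]
        by_cases hi : i ∈ A
        · have hB : (insert j (A.erase i)).card ≤ m / 2 - 1 := by
            have h1 : (A.erase i).card = A.card - 1 := Finset.card_erase_of_mem hi
            have h2 : (insert j (A.erase i)).card ≤ (A.erase i).card + 1 :=
              Finset.card_insert_le _ _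
            have hpos : 1 ≤ A.card := Finset.card_pos.mpr ⟨i, hi⟩
            omega
          have heq : (pU m (Qmap m i j))⁻¹ * s * pU m (Qmap m i j)
              = xU m (vA m A) * (zU m (vA m A) * zU m (vA m (insert j (A.erase i)))) := by
            refine Units.ext ?_
            rw [hval, Units.val_mul, Units.val_mul, vA_comp_Q_mem A hi, ← Zmat_mul]
            rfl
          rw [heq]
          exact mul_mem (xU_mem hA) (mul_mem (zU_mem hA) (zU_mem hB))
        · have heq : (pU m (Qmap m i j))⁻¹ * s * pU m (Qmap m i j)
              = xU m (vA m A) * zU m (vA m A) := by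
            refine Units.ext ?_
            rw [hval, Units.val_mul, vA_comp_Q_notmem A hi]
            rfl
          rw [heq]
          exact mul_mem (xU_mem hA) (zU_mem hA)
      · have hval : (((pU m (Qmap m i j))⁻¹ * s * pU m (Qmap m i j) :
            (Matrix (St m) (St m) ℂ)ˣ) : Matrix (St m) (St m) ℂ) = Zmat m (vA m A) := by
          rw [Units.val_mul, Units.val_mul]
          show UPgInv m (Qmap m i j) * (s : Matrix (St m) (St m) ℂ) * UPg m (Qmap m i j) = _
          rw [hs, UPgInv_comm_Z, mul_assoc, UPgInv_mul_UPg, mul_one]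
        have heq : (pU m (Qmap m i j))⁻¹ * s * pU m (Qmap m i j) = zU m (vA m A) :=
          Units.ext hval
        rw [heq]
        exact zU_mem hA
    exact main_of_unit _ (pU m (Qmap m i j)) rfl hgen hgen'
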